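/- If X and Y are two critical independent sets of a graph G, then |N(X) ∩ Y| = |N(Y) ∩ X|. -/

import Mathlib

open Classical Finset

/-- Neighborhood of a set of vertices: all vertices adjacent to some vertex of `X`. -/
noncomputable def nbhd {V : Type*} (G : SimpleGraph V) [Fintype V] (X : Finset V) : Finset V :=
  Finset.univ.filter (fun v => ∃ x ∈ X, G.Adj x v)

/-- The difference `d(X) = |X| - |N(X)|`. -/
noncomputable def gdiff {V : Type*} (G : SimpleGraph V) [Fintype V] (X : Finset V) : ℤ :=
  (X.card : ℤ) - ((nbhd G X).card : ℤ)

/-- `X` is an independent set of `G`. -/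
def IsIndep {V : Type*} (G : SimpleGraph V) (X : Finset V) : Prop :=
  ∀ x ∈ X, ∀ y ∈ X, ¬ G.Adj x y

/-- The critical difference `d_c(G) = max { d(X) : X ⊆ V(G) }`. -/
noncomputable def critDiff {V : Type*} (G : SimpleGraph V) [Fintype V] : ℤ :=
  Finset.univ.powerset.sup' ⟨∅, Finset.empty_mem_powerset _⟩ (gdiff G)

/-- `X` is a critical set of `G`. -/
noncomputable def IsCritical {V : Type*} (G : SimpleGraph V) [Fintype V] (X : Finset V) : Prop :=
  gdiff G X = critDiff G

/-- `ker G` : the intersection of all critical sets of `G`. -/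
noncomputable def kerG {V : Type*} (G : SimpleGraph V) [Fintype V] : Finset V :=
  Finset.univ.filter (fun v => ∀ X : Finset V, IsCritical G X → v ∈ X)

/-- `diadem G` : the union of all critical independent sets of `G`. -/
noncomputable def diademG {V : Type*} (G : SimpleGraph V) [Fintype V] : Finset V :=
  Finset.univ.filter (fun v => ∃ X : Finset V, IsCritical G X ∧ IsIndep G X ∧ v ∈ X)

/-- The independence number `α(G)`. -/
noncomputable def alphaG {V : Type*} (G : SimpleGraph V) [Fintype V] : ℕ :=
  (Finset.univ.powerset.filter (IsIndep G)).sup Finset.card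

/-- `core G` : the intersection of all maximum independent sets of `G`. -/
noncomputable def coreG {V : Type*} (G : SimpleGraph V) [Fintype V] : Finset V :=
  Finset.univ.filter (fun v => ∀ I : Finset V, IsIndep G I → I.card = alphaG G → v ∈ I)

/-- `M` is a matching of `G`, given as a finite set of pairwise disjoint edges of `G`. -/
def IsMatchingF {V : Type*} (G : SimpleGraph V) (M : Finset (Sym2 V)) : Prop :=
  (↑M : Set (Sym2 V)) ⊆ G.edgeSet ∧
    ∀ e₁ ∈ M, ∀ e₂ ∈ M, e₁ ≠ e₂ → ∀ v : V, v ∈ e₁ → v ∉ e₂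

/-- The matching number `μ(G)`. -/
noncomputable def matchNum {V : Type*} (G : SimpleGraph V) [Fintype V] : ℕ :=
  ((Finset.univ : Finset (Finset (Sym2 V))).filter (IsMatchingF G)).sup Finset.card

/-- There is a matching from `A` into `B`: an injection of `A` into `B` along edges of `G`. -/
def MatchingFromInto {V : Type*} (G : SimpleGraph V) (A B : Finset V) : Prop :=
  ∃ f : V → V, Set.InjOn f ↑A ∧ ∀ a ∈ A, f a ∈ B ∧ G.Adj a (f a)

/-- The auxiliary bipartite graph `H_X` on vertex set `X ∪ N(X) ∪ {v, w}`, where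
`v = Sum.inr false` and `w = Sum.inr true`.  Its edges are the edges of `G` between
`X` and `N(X)`, the edge `vw`, and all edges from `v` to `N(X)`. -/
noncomputable def HX {V : Type*} (G : SimpleGraph V) [Fintype V] (X : Finset V) :
    SimpleGraph ({a : V // a ∈ X ∪ nbhd G X} ⊕ Bool) :=
  SimpleGraph.fromRel (fun p q =>
    match p, q with
    | Sum.inl a, Sum.inl b => a.1 ∈ X ∧ b.1 ∈ nbhd G X ∧ G.Adj a.1 b.1
    | Sum.inr false, Sum.inr true => True
    | Sum.inr false, Sum.inl b => b.1 ∈ nbhd G X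
    | _, _ => False)

/-- The copy of `X` inside the vertex set of `H_X`. -/
noncomputable def Xlift {V : Type*} (G : SimpleGraph V) [Fintype V] (X : Finset V) :
    Finset ({a : V // a ∈ X ∪ nbhd G X} ⊕ Bool) :=
  Finset.univ.filter (fun p => ∃ a : {a : V // a ∈ X ∪ nbhd G X}, p = Sum.inl a ∧ a.1 ∈ X)

/-- Edmonds–Gallai set `D`: vertices missed by some maximum matching. -/
noncomputable def gallaiD {V : Type*} (G : SimpleGraph V) [Fintype V] : Finset V :=
  Finset.univ.filter (fun v => ∃ M : Finset (Sym2 V),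
    IsMatchingF G M ∧ M.card = matchNum G ∧ ∀ e ∈ M, v ∉ e)

/-- Edmonds–Gallai set `A = N(D) - D`. -/
noncomputable def gallaiA {V : Type*} (G : SimpleGraph V) [Fintype V] : Finset V :=
  nbhd G (gallaiD G) \ gallaiD G

/-- Edmonds–Gallai set `C = V - A - D`. -/
noncomputable def gallaiC {V : Type*} (G : SimpleGraph V) [Fintype V] : Finset V :=
  (Finset.univ \ gallaiD G) \ gallaiA G

/-- The vertices of the singleton components of `G[D]`. -/
noncomputable def singlesD {V : Type*} (G : SimpleGraph V) [Fintype V] : Finset V :=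
  (gallaiD G).filter (fun v => ∀ w ∈ gallaiD G, ¬ G.Adj v w)


lemma gdiff_le_crit {V : Type*} (G : SimpleGraph V) [Fintype V] (Z : Finset V) :
    gdiff G Z ≤ critDiff G :=
  Finset.le_sup' (gdiff G) (Finset.mem_powerset.2 (Finset.subset_univ Z))

lemma mem_nbhd {V : Type*} {G : SimpleGraph V} [Fintype V] {X : Finset V} {v : V} :
    v ∈ nbhd G X ↔ ∃ x ∈ X, G.Adj x v := by
  simp [nbhd]

/-- For every critical set `S` there is a matching from `N(S)` into `S`. -/
lemma crit_matching {V : Type*} (G : SimpleGraph V) [Fintype V] [DecidableEq V]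
    [DecidableRel G.Adj] (S : Finset V) (hc : IsCritical G S) :
    ∃ f : V → V, Set.InjOn f ↑(nbhd G S) ∧ ∀ v ∈ nbhd G S, f v ∈ S ∧ G.Adj v (f v) := by
  classical
  set N := nbhd G S with hN
  let t : {v // v ∈ N} → Finset V := fun v => S.filter (fun s => G.Adj v.1 s)
  have hall : ∀ T : Finset {v // v ∈ N}, T.card ≤ (T.biUnion t).card := by
    intro T
    set U : Finset V := T.biUnion t with hU
    set T' : Finset V := T.image Subtype.val with hT'
    have hT'card : T'.card = T.card := Finset.card_image_of_injective _ Subtype.val_injective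
    have hUS : U ⊆ S := by
      intro u hu
      rcases Finset.mem_biUnion.1 hu with ⟨x, _, hx⟩
      exact (Finset.mem_filter.1 hx).1
    have hT'N : T' ⊆ N := by
      intro u hu
      rcases Finset.mem_image.1 hu with ⟨x, _, rfl⟩
      exact x.2
    set S' : Finset V := S \ U with hS'
    have hsub : nbhd G S' ⊆ N \ T' := by
      intro u hu
      rcases mem_nbhd.1 hu with ⟨s, hs, hadj⟩
      have hsS' := Finset.mem_sdiff.1 hs
      refine Finset.mem_sdiff.2 ⟨mem_nbhd.2 ⟨s, hsS'.1, hadj⟩, ?_⟩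
      intro huT'
      rcases Finset.mem_image.1 huT' with ⟨x, hxT, rfl⟩
      exact hsS'.2 (Finset.mem_biUnion.2 ⟨x, hxT, Finset.mem_filter.2 ⟨hsS'.1, hadj.symm⟩⟩)
    have hcard1 : S'.card + U.card = S.card := by
      rw [hS', Finset.card_sdiff_of_subset hUS]
      exact Nat.sub_add_cancel (Finset.card_le_card hUS)
    have hcard2 : (nbhd G S').card + T'.card ≤ N.card := by
      have h1 : (nbhd G S').card ≤ (N \ T').card := Finset.card_le_card hsub
      rw [Finset.card_sdiff_of_subset hT'N] at h1
      have := Finset.card_le_card hT'N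
      omega
    have hd : gdiff G S' ≤ gdiff G S := hc ▸ gdiff_le_crit G S'
    unfold gdiff at hd
    rw [← hN] at hd
    have hUcard : U.card ≤ S.card := Finset.card_le_card hUS
    omega
  obtain ⟨f0, hf0inj, hf0mem⟩ :=
    (Finset.all_card_le_biUnion_card_iff_existsInjective' t).1 hall
  refine ⟨fun v => if h : v ∈ N then f0 ⟨v, h⟩ else v, ?_, ?_⟩
  · intro a ha b hb hab
    simp only [Finset.mem_coe] at ha hb
    simp only [dif_pos ha, dif_pos hb] at hab
    exact congrArg Subtype.val (hf0inj hab)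
  · intro v hv
    simp only [dif_pos hv]
    have := hf0mem ⟨v, hv⟩
    rw [Finset.mem_filter] at this
    exact ⟨this.1, this.2⟩

lemma side_le {V : Type*} (G : SimpleGraph V) [Fintype V] [DecidableEq V] [DecidableRel G.Adj]
    (X Y : Finset V) (hYc : IsCritical G Y) :
    (nbhd G Y ∩ X).card ≤ (nbhd G X ∩ Y).card := by
  obtain ⟨f, hinj, hf⟩ := crit_matching G Y hYc
  apply Finset.card_le_card_of_injOn f
  · intro v hv
    rw [Finset.mem_coe, Finset.mem_inter] at hv ⊢
    obtain ⟨hfY, hadj⟩ := hf v hv.1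
    exact ⟨mem_nbhd.2 ⟨v, hv.2, hadj⟩, hfY⟩
  · exact hinj.mono (by intro v hv; exact Finset.mem_coe.2 (Finset.mem_inter.1 hv).1)

/-- for critical independent sets `X`, `Y`, `|N(X) ∩ Y| = |N(Y) ∩ X|`. -/
theorem stmt10 {V : Type*} (G : SimpleGraph V) [Fintype V] [DecidableEq V] [DecidableRel G.Adj]
    (X Y : Finset V) (hXc : IsCritical G X) (hXi : IsIndep G X)
    (hYc : IsCritical G Y) (hYi : IsIndep G Y) :
    (nbhd G X ∩ Y).card = (nbhd G Y ∩ X).card :=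
  le_antisymm (side_le G Y X hXc) (side_le G X Y hYc)
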